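/- Let W be a module of level 1 over H_I such that each p_i acts locally finitely and W is restricted. For a finitely supported μ : I → ℂ, define W_μ = {w ∈ W : (p_i − μ_i)^r w = 0 for each i and some r depending on i}. Then each W_μ is an H_I-submodule of W and W = ⊕_μ W_μ. -/

import Mathlib

/-- A level-one module for the Heisenberg Lie algebra `H_I` with basis
`{p_i, q_i, k | i ∈ I}`, relations `[p_i, q_j] = δ_{ij} k`, all other brackets zero,
where the central element `k` acts as the identity (level `1`). -/
structure HeisenbergRep (I : Type) (W : Type) [AddCommGroup W] [Module ℂ W] where
  p : I → Module.End ℂ W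
  q : I → Module.End ℂ W
  comm_pp : ∀ i j, Commute (p i) (p j)
  comm_qq : ∀ i j, Commute (q i) (q j)
  comm_pq_same : ∀ i, p i * q i - q i * p i = 1
  comm_pq_ne : ∀ i j, i ≠ j → Commute (p i) (q j)

namespace HeisenbergRep

variable {I : Type} {W : Type} [AddCommGroup W] [Module ℂ W]

/-- A submodule stable under all the Heisenberg operators. -/
def Stable (ρ : HeisenbergRep I W) (S : Submodule ℂ W) : Prop :=
  (∀ i, ∀ w ∈ S, ρ.p i w ∈ S) ∧ (∀ i, ∀ w ∈ S, ρ.q i w ∈ S)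

/-- `S` is a nonzero stable submodule with no proper nonzero stable submodule. -/
def IsSimpleSub (ρ : HeisenbergRep I W) (S : Submodule ℂ W) : Prop :=
  ρ.Stable S ∧ S ≠ ⊥ ∧ ∀ T : Submodule ℂ W, ρ.Stable T → T ≤ S → T = ⊥ ∨ T = S

/-- Irreducibility of the representation. -/
def IsIrreducible (ρ : HeisenbergRep I W) : Prop := ρ.IsSimpleSub ⊤

end HeisenbergRep

/-- An endomorphism is locally finite if every vector lies in a
finitely generated (equivalently, finite-dimensional) stable subspace. -/
def Module.End.LocallyFinite {W : Type} [AddCommGroup W] [Module ℂ W]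
    (T : Module.End ℂ W) : Prop :=
  ∀ w : W, ∃ S : Submodule ℂ W, w ∈ S ∧ S.FG ∧ ∀ v ∈ S, T v ∈ S

/-- An endomorphism is locally nilpotent if every vector is killed by some power of it. -/
def Module.End.LocallyNilpotent {W : Type} [AddCommGroup W] [Module ℂ W]
    (T : Module.End ℂ W) : Prop :=
  ∀ w : W, ∃ n : ℕ, (T ^ n) w = 0

/-- Restricted: for each vector `w`, `p_i w = 0` for all but finitely many `i`. -/
def HeisenbergRep.Restricted {I W : Type} [AddCommGroup W] [Module ℂ W]
    (ρ : HeisenbergRep I W) : Prop :=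
  ∀ w : W, {i : I | ρ.p i w ≠ 0}.Finite


namespace GenEigAux


variable {W : Type} [AddCommGroup W] [Module ℂ W]

lemma commute_aeval {A B : Module.End ℂ W} (h : Commute A B) (g : Polynomial ℂ) :
    Commute A (Polynomial.aeval B g) := by
  induction g using Polynomial.induction_on' with
  | add p q hp hq => simpa [map_add] using hp.add_right hq
  | monomial n a =>
      rw [Polynomial.aeval_monomial]
      exact (Algebra.commute_algebraMap_right a A).mul_right (h.pow_right n)

lemma weyl {A B : Module.End ℂ W} (h : A * B - B * A = 1) (m : ℕ) :
    A ^ (m + 1) * B = B * A ^ (m + 1) + ((m : ℂ) + 1) • A ^ m := by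
  have hAB : A * B = B * A + 1 := by rw [← h]; noncomm_ring
  induction m with
  | zero => simpa using hAB
  | succ m ih =>
      have h1 : A ^ (m + 2) * B = A * (A ^ (m + 1) * B) := by
        rw [← mul_assoc, ← pow_succ']
      have h2 : B * A * A ^ (m + 1) = B * A ^ (m + 2) := by rw [mul_assoc, ← pow_succ']
      rw [h1, ih, mul_add, ← mul_assoc, hAB, add_mul, one_mul, mul_smul_comm, ← pow_succ', h2]
      push_cast
      module

lemma pow_apply_restrict (T : Module.End ℂ W) {S : Submodule ℂ W}
    (hst : ∀ x ∈ S, T x ∈ S) (c : ℂ) (k : ℕ) (x : S) :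
    (((T.restrict hst - c • 1) ^ k) x : W) = ((T - c • (1 : Module.End ℂ W)) ^ k) (x : W) := by
  induction k with
  | zero => simp
  | succ k ih =>
      rw [pow_succ', pow_succ', Module.End.mul_apply, Module.End.mul_apply]
      simp only [LinearMap.sub_apply, LinearMap.smul_apply, Module.End.one_apply]
      rw [← ih]
      push_cast [LinearMap.restrict_coe_apply]
      ring_nf

variable {W : Type} [AddCommGroup W] [Module ℂ W]

lemma q_stable {I : Type} (ρ : HeisenbergRep I W) (i : I) (c : ℂ) {w : W}
    (hw : w ∈ (ρ.p i).maxGenEigenspace c) : ρ.q i w ∈ (ρ.p i).maxGenEigenspace c := by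
  obtain ⟨k, hk⟩ := (Module.End.mem_maxGenEigenspace _ _ _).mp hw
  have h1 : (ρ.p i - c • 1) * ρ.q i - ρ.q i * (ρ.p i - c • 1) = 1 := by
    have h0 := ρ.comm_pq_same i
    rw [sub_mul, mul_sub, smul_mul_assoc, mul_smul_comm, one_mul, mul_one, ← h0]
    abel
  have h2 := weyl h1 k
  have hk1 : ((ρ.p i - c • 1) ^ (k + 1)) w = 0 := by
    rw [pow_succ', Module.End.mul_apply, hk, map_zero]
  refine (Module.End.mem_maxGenEigenspace _ _ _).mpr ⟨k + 1, ?_⟩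
  rw [← Module.End.mul_apply, h2, LinearMap.add_apply, Module.End.mul_apply, hk1, map_zero,
    LinearMap.smul_apply, hk, smul_zero, add_zero]

lemma exists_decomp (T : Module.End ℂ W) (hT : T.LocallyFinite) (w : W) :
    ∃ d : ℂ →₀ W, (d.sum fun _ x => x) = w ∧
      ∀ c, d c ∈ T.maxGenEigenspace c ∧ ∃ g : Polynomial ℂ, d c = Polynomial.aeval T g w := by
  obtain ⟨S, hwS, hSfg, hSst⟩ := hT w
  classical
  set φ : Polynomial ℂ →ₗ[ℂ] W :=
    { toFun := fun g => Polynomial.aeval T g w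
      map_add' := by intro a b; simp [map_add]
      map_smul' := by intro a b; simp [map_smul] } with hφ
  set S' : Submodule ℂ W := LinearMap.range φ with hS'
  have hTn : ∀ n : ℕ, (T ^ n) w ∈ S := by
    intro n; induction n with
    | zero => simpa using hwS
    | succ n ih => rw [pow_succ', Module.End.mul_apply]; exact hSst _ ih
  have hle : S' ≤ S := by
    rintro x ⟨g, rfl⟩
    induction g using Polynomial.induction_on' with
    | add p q hp hq => simpa [map_add] using S.add_mem hp hq
    | monomial n a =>
        simpa [φ, Polynomial.aeval_monomial, Algebra.smul_def] using S.smul_mem a (hTn n)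
  have hst : ∀ x ∈ S', T x ∈ S' := by
    rintro x ⟨g, rfl⟩
    exact ⟨Polynomial.X * g, by simp [φ, Module.End.mul_apply]⟩
  haveI : Module.Finite ℂ S := Module.Finite.iff_fg.mpr hSfg
  haveI : FiniteDimensional ℂ S' := Submodule.finiteDimensional_of_le hle
  set T' : Module.End ℂ ↥S' := T.restrict hst with hT'
  have htop := Module.End.iSup_maxGenEigenspace_eq_top T'
  have hwS' : w ∈ S' := ⟨1, by simp [φ]⟩
  have hmem : (⟨w, hwS'⟩ : S') ∈ ⨆ c : ℂ, T'.maxGenEigenspace c := htop ▸ Submodule.mem_top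
  obtain ⟨d', hd'mem, hd'sum⟩ := (Submodule.mem_iSup_iff_exists_finsupp _ _).mp hmem
  refine ⟨d'.mapRange (S'.subtype) (map_zero _), ?_, fun c => ⟨?_, ?_⟩⟩
  · rw [Finsupp.sum_mapRange_index (by simp)]
    calc (d'.sum fun _ x => (S'.subtype) x) = S'.subtype (d'.sum fun _ x => x) :=
          (map_finsuppSum S'.subtype d' _).symm
      _ = w := by rw [hd'sum]; rfl
  · obtain ⟨k, hk⟩ := (Module.End.mem_maxGenEigenspace _ _ _).mp (hd'mem c)
    refine (Module.End.mem_maxGenEigenspace _ _ _).mpr ⟨k, ?_⟩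
    have := pow_apply_restrict T hst c k (d' c)
    rw [hk] at this
    simpa [Finsupp.mapRange_apply] using this.symm
  · obtain ⟨g, hg⟩ := (d' c).2
    exact ⟨g, by simp [Finsupp.mapRange_apply, ← hg, φ]⟩

end GenEigAux

lemma GenEigAux.main
    {I W : Type} [DecidableEq (I →₀ ℂ)] [AddCommGroup W] [Module ℂ W]
    (ρ : HeisenbergRep I W) (hres : ρ.Restricted)
    (hfin : ∀ i, (ρ.p i).LocallyFinite) :
    ∃ f : (I →₀ ℂ) → Submodule ℂ W,
      (∀ mu : I →₀ ℂ, (f mu : Set W) =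
        {w : W | ∀ i, ∃ r : ℕ, ((ρ.p i - mu i • 1) ^ r) w = 0}) ∧
      (∀ mu, ρ.Stable (f mu)) ∧
      DirectSum.IsInternal f := by
  classical
  set F : (I →₀ ℂ) → Submodule ℂ W :=
    fun mu => ⨅ i, (ρ.p i).maxGenEigenspace (mu i) with hF
  have hFmem : ∀ (mu : I →₀ ℂ) (w : W),
      w ∈ F mu ↔ ∀ i, ∃ r : ℕ, ((ρ.p i - mu i • 1) ^ r) w = 0 := by
    intro mu w
    simp [hF, Submodule.mem_iInf, Module.End.mem_maxGenEigenspace]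
  refine ⟨F, ?_, ?_, ?_⟩
  · intro mu
    ext w
    simpa using hFmem mu w
  · -- stability
    intro mu
    constructor
    · intro j w hw
      rw [Submodule.mem_iInf] at hw ⊢
      intro i
      exact Module.End.mapsTo_maxGenEigenspace_of_comm (ρ.comm_pp i j) (mu i) (hw i)
    · intro j w hw
      rw [Submodule.mem_iInf] at hw ⊢
      intro i
      rcases eq_or_ne i j with rfl | hij
      · exact GenEigAux.q_stable ρ i (mu i) (hw i)
      · exact Module.End.mapsTo_maxGenEigenspace_of_comm (ρ.comm_pq_ne i j hij) (mu i) (hw i)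
  · rw [DirectSum.isInternal_submodule_iff_iSupIndep_and_iSup_eq_top]
    constructor
    · have hind : iSupIndep fun χ : I → ℂ => ⨅ i, (ρ.p i).maxGenEigenspace (χ i) :=
        Module.End.independent_iInf_maxGenEigenspace_of_forall_mapsTo ρ.p
          (fun i j φ => Module.End.mapsTo_maxGenEigenspace_of_comm (ρ.comm_pp j i) φ)
      exact hind.comp (DFunLike.coe_injective (F := I →₀ ℂ))
    · -- spanning
      have span : ∀ (J : Finset I) (mu : I →₀ ℂ) (w : W),
          (∀ i, i ∉ J → ∃ r : ℕ, ((ρ.p i - mu i • 1) ^ r) w = 0) →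
          w ∈ ⨆ ν : I →₀ ℂ, F ν := by
        intro J
        induction J using Finset.induction_on with
        | empty =>
            intro mu w h
            exact le_iSup F mu ((hFmem mu w).mpr fun i => h i (Finset.notMem_empty i))
        | insert _ _ ha =>
            rename_i a J ih
            intro mu w h
            obtain ⟨d, hdsum, hd⟩ := GenEigAux.exists_decomp (ρ.p a) (hfin a) w
            rw [← hdsum]
            refine Submodule.sum_mem _ fun c _ => ?_
            refine ih (mu.update a c) (d c) fun i hi => ?_
            rcases eq_or_ne i a with rfl | hia
            · obtain ⟨k, hk⟩ := (Module.End.mem_maxGenEigenspace _ _ _).mp (hd c).1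
              exact ⟨k, by simpa [Finsupp.coe_update] using hk⟩
            · obtain ⟨r, hr⟩ := h i (by simp [hia, hi])
              obtain ⟨g, hg⟩ := (hd c).2
              have hcomm : Commute ((ρ.p i - mu i • 1) ^ r) (Polynomial.aeval (ρ.p a) g) :=
                (GenEigAux.commute_aeval
                  (((ρ.comm_pp i a)).sub_left ((Commute.one_left (ρ.p a)).smul_left (mu i)))
                  g).pow_left r
              refine ⟨r, ?_⟩
              have : ((ρ.p i - mu i • 1) ^ r) (d c) =
                  Polynomial.aeval (ρ.p a) g (((ρ.p i - mu i • 1) ^ r) w) := by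
                rw [hg, ← Module.End.mul_apply, hcomm.eq, Module.End.mul_apply]
              simpa [Finsupp.coe_update, Function.update_of_ne hia, hr] using this
      rw [eq_top_iff]
      intro w _
      refine span (hres w).toFinset 0 w fun i hi => ⟨1, ?_⟩
      have : ρ.p i w = 0 := by
        by_contra hne
        exact hi ((hres w).mem_toFinset.mpr hne)
      simpa using this

/-- For a restricted level-one `H_I`-module on which each `p_i` acts locally finitely,
the generalized simultaneous eigenspaces `W_μ = {w | (p_i − μ_i)^r w = 0 for each i and
some r}` (for finitely supported `μ`) are `H_I`-submodules and `W = ⊕_μ W_μ`. -/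

theorem generalized_eigenspace_decomposition
    {I W : Type} [DecidableEq (I →₀ ℂ)] [AddCommGroup W] [Module ℂ W]
    (ρ : HeisenbergRep I W) (hres : ρ.Restricted)
    (hfin : ∀ i, (ρ.p i).LocallyFinite) :
    ∃ f : (I →₀ ℂ) → Submodule ℂ W,
      (∀ mu : I →₀ ℂ, (f mu : Set W) =
        {w : W | ∀ i, ∃ r : ℕ, ((ρ.p i - mu i • 1) ^ r) w = 0}) ∧
      (∀ mu, ρ.Stable (f mu)) ∧
      DirectSum.IsInternal f := by
  exact GenEigAux.main ρ hres hfin
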